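/- Define v(n,k) := 4(n+1)(n−k−1)(n(3k²+5k−4) − (k³+k²+2k+8))/(n(n−1)²(k+1)²(k+2)²(k+3)(k+4)) and c(n,k1,k2) := −8(n+1)(3n−k2+2)(n−k2−1)/(n(n−1)²(k1+1)(k1+2)(k2+1)(k2+2)(k2+3)(k2+4)). Then for all integers n ≥ 4 and 1 ≤ i ≤ n−1: (1/i²)·[ ∑_{k=i}^{n−1} v(n,k) + 2·∑_{i ≤ k1 < k2 ≤ n−1} c(n,k1,k2) ] = 4(n+1)(n−i)(n−i−1)(i−1)/(n(n−1)²·i²(i+1)²(i+2)(i+3)). -/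

import Mathlib

/-- `v(n,k) = Var(E[1_k^{(n)} | 𝒴_n])`. -/
noncomputable def vVar (n k : ℝ) : ℝ :=
  4 * (n + 1) * (n - k - 1) * (n * (3 * k ^ 2 + 5 * k - 4) - (k ^ 3 + k ^ 2 + 2 * k + 8)) /
    (n * (n - 1) ^ 2 * (k + 1) ^ 2 * (k + 2) ^ 2 * (k + 3) * (k + 4))

/-- `c(n,k1,k2) = Cov(E[1_{k1}^{(n)} | 𝒴_n], E[1_{k2}^{(n)} | 𝒴_n])`. -/
noncomputable def cCov (n k1 k2 : ℝ) : ℝ :=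
  -8 * (n + 1) * (3 * n - k2 + 2) * (n - k2 - 1) /
    (n * (n - 1) ^ 2 * (k1 + 1) * (k1 + 2) * (k2 + 1) * (k2 + 2) * (k2 + 3) * (k2 + 4))

/-- Closed form for the tail of the covariance sum. -/
noncomputable def sClosed (n k1 j : ℝ) : ℝ :=
  -8 * (n + 1) * (n - j) * (n - j - 1) /
    (n * (n - 1) ^ 2 * (k1 + 1) * (k1 + 2) * (j + 1) * (j + 2) * (j + 3))

/-- Closed form for the bracketed sum. -/
noncomputable def bClosed (n i : ℝ) : ℝ :=
  4 * (n + 1) * (n - i) * (n - i - 1) * (i - 1) /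
    (n * (n - 1) ^ 2 * (i + 1) ^ 2 * (i + 2) * (i + 3))

/-- Telescoping sums over `Icc`. -/
lemma tele (g G : ℕ → ℝ) (h : ∀ k, g k = G k - G (k + 1)) :
    ∀ m j : ℕ, j ≤ m + 1 → ∑ k ∈ Finset.Icc j m, g k = G j - G (m + 1) := by
  intro m
  induction m with
  | zero =>
    intro j hj
    interval_cases j
    · simp [h 0]
    · simp
  | succ m ih =>
    intro j hj
    rcases Nat.lt_or_ge j (m + 2) with hlt | hge
    · have hj' : j ≤ m + 1 := Nat.lt_succ_iff.mp hlt
      rw [Finset.sum_Icc_succ_top hj', ih j hj', h (m + 1)]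
      ring
    · have : j = m + 2 := le_antisymm hj hge
      subst this
      simp

lemma cast_pos_ne (k : ℕ) (a : ℝ) (ha : 0 < a) : (k : ℝ) + a ≠ 0 := by
  positivity

/-- Closed form for the variance `Var(V_i^{(n)})` of the `i`-th topological weight of
a Yule tree with `n` tips. -/
theorem stmt6 (n i : ℕ) (hn : 4 ≤ n) (hi1 : 1 ≤ i) (hi2 : i ≤ n - 1) :
    (1 / (i : ℝ) ^ 2) *
      ((∑ k ∈ Finset.Icc i (n - 1), vVar n k) +
        2 * ∑ k1 ∈ Finset.Icc i (n - 1), ∑ k2 ∈ Finset.Icc (k1 + 1) (n - 1), cCov n k1 k2) =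
    4 * ((n : ℝ) + 1) * ((n : ℝ) - i) * ((n : ℝ) - i - 1) * ((i : ℝ) - 1) /
      ((n : ℝ) * ((n : ℝ) - 1) ^ 2 * (i : ℝ) ^ 2 * ((i : ℝ) + 1) ^ 2 *
        ((i : ℝ) + 2) * ((i : ℝ) + 3)) := by
  obtain ⟨m, rfl⟩ : ∃ m, n = m + 1 := ⟨n - 1, by omega⟩
  simp only [Nat.add_sub_cancel] at hi2 ⊢
  have hN4 : (4 : ℝ) ≤ (m : ℝ) + 1 := by exact_mod_cast hn
  have hN0 : ((m : ℝ) + 1) ≠ 0 := by linarith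
  have hN1 : ((m : ℝ) + 1) - 1 ≠ 0 := by
    push_cast
    have : (3 : ℝ) ≤ (m : ℝ) := by linarith
    linarith
  have hm3 : (3 : ℝ) ≤ (m : ℝ) := by linarith
  -- inner telescoping
  have hinner : ∀ k1 : ℕ, k1 ∈ Finset.Icc i m →
      ∑ k2 ∈ Finset.Icc (k1 + 1) m, cCov (m + 1 : ℕ) k1 k2
        = sClosed ((m : ℝ) + 1) k1 ((k1 : ℝ) + 1) := by
    intro k1 hk1
    have hk1m : k1 ≤ m := (Finset.mem_Icc.mp hk1).2
    have step : ∀ k : ℕ, cCov (m + 1 : ℕ) k1 k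
        = sClosed ((m : ℝ) + 1) k1 k - sClosed ((m : ℝ) + 1) k1 ((k : ℕ) + 1 : ℕ) := by
      intro k
      unfold cCov sClosed
      push_cast
      have h1 := cast_pos_ne k1 1 one_pos
      have h2 := cast_pos_ne k1 2 two_pos
      have h3 := cast_pos_ne k 1 one_pos
      have h4 := cast_pos_ne k 2 two_pos
      have h5 := cast_pos_ne k 3 (by norm_num : (0:ℝ) < 3)
      have h6 := cast_pos_ne k 4 (by norm_num : (0:ℝ) < 4)
      have h7 : (k : ℝ) + 1 + 1 ≠ 0 := by positivity
      have h8 : (k : ℝ) + 1 + 2 ≠ 0 := by positivity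
      have h9 : (k : ℝ) + 1 + 3 ≠ 0 := by positivity
      field_simp
      ring
    have htel := tele (fun k2 => cCov (m + 1 : ℕ) k1 k2)
      (fun j => sClosed ((m : ℝ) + 1) k1 j) step m (k1 + 1) (by omega)
    rw [htel]
    have hend : sClosed ((m : ℝ) + 1) k1 ((m + 1 : ℕ) : ℝ) = 0 := by
      unfold sClosed
      push_cast
      simp [sub_self]
    rw [hend, sub_zero]
    push_cast
    ring_nf
  rw [Finset.sum_congr rfl hinner]
  -- outer telescoping
  have step2 : ∀ k : ℕ, (vVar (m + 1 : ℕ) k + 2 * sClosed ((m : ℝ) + 1) k ((k : ℝ) + 1))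
      = bClosed ((m : ℝ) + 1) k - bClosed ((m : ℝ) + 1) ((k + 1 : ℕ) : ℝ) := by
    intro k
    unfold vVar sClosed bClosed
    push_cast
    have h1 := cast_pos_ne k 1 one_pos
    have h2 := cast_pos_ne k 2 two_pos
    have h3 := cast_pos_ne k 3 (by norm_num : (0:ℝ) < 3)
    have h4 := cast_pos_ne k 4 (by norm_num : (0:ℝ) < 4)
    have h5 : (k : ℝ) + 1 + 1 ≠ 0 := by positivity
    have h6 : (k : ℝ) + 1 + 2 ≠ 0 := by positivity
    have h7 : (k : ℝ) + 1 + 3 ≠ 0 := by positivity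
    field_simp
    ring
  have houter : ∑ k ∈ Finset.Icc i m,
      (vVar (m + 1 : ℕ) k + 2 * sClosed ((m : ℝ) + 1) k ((k : ℝ) + 1))
      = bClosed ((m : ℝ) + 1) i - bClosed ((m : ℝ) + 1) ((m : ℝ) + 1) := by
    have := tele (fun k => vVar (m + 1 : ℕ) k + 2 * sClosed ((m : ℝ) + 1) k ((k : ℝ) + 1))
      (fun j => bClosed ((m : ℝ) + 1) j)
      (fun k => by simpa using step2 k) m i (by omega)
    push_cast at this
    simpa using this
  have hsplit : (∑ k ∈ Finset.Icc i m, vVar (m + 1 : ℕ) k) +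
      2 * ∑ k ∈ Finset.Icc i m, sClosed ((m : ℝ) + 1) k ((k : ℝ) + 1)
      = ∑ k ∈ Finset.Icc i m,
        (vVar (m + 1 : ℕ) k + 2 * sClosed ((m : ℝ) + 1) k ((k : ℝ) + 1)) := by
    rw [Finset.sum_add_distrib, Finset.mul_sum]
  rw [hsplit, houter]
  have hend2 : bClosed ((m : ℝ) + 1) ((m : ℝ) + 1) = 0 := by
    unfold bClosed
    push_cast
    simp [sub_self]
  rw [hend2, sub_zero]
  -- final algebra
  unfold bClosed
  have hi0 : (i : ℝ) ≠ 0 := by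
    have : (1 : ℝ) ≤ (i : ℝ) := by exact_mod_cast hi1
    linarith
  have hI1 := cast_pos_ne i 1 one_pos
  have hI2 := cast_pos_ne i 2 two_pos
  have hI3 := cast_pos_ne i 3 (by norm_num : (0:ℝ) < 3)
  push_cast
  field_simp
  try exact Or.inl trivial
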